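/- Let G be an additive abelian group and let d be a permutation of {1,...,N}. Suppose user j knows S_j = Σ_{n=1}^N W_n^j and, for each i ≠ j, knows W_{d_i}^j and W_{d_j}^i. Then user j can reconstruct the entire file W_{d_j} = (W_{d_j}^1, ..., W_{d_j}^N). -/
import Mathlib

/-- User `j`, knowing `S_j = ∑ n, W n j`, the subfiles `W (d i) j` for `i ≠ j`,
and the subfiles `W (d j) i` for `i ≠ j`, can reconstruct the whole file
`W (d j)`: there is a decoder depending only on this knowledge. -/
theorem stmt16 {G : Type*} [AddCommGroup G] (N : ℕ)
    (d : Equiv.Perm (Fin N)) (j : Fin N) :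
    ∃ f : G → ({i : Fin N // i ≠ j} → G) → ({i : Fin N // i ≠ j} → G) →
        (Fin N → G),
      ∀ W : Fin N → Fin N → G,
        f (∑ n, W n j) (fun i => W (d i.1) j) (fun i => W (d j) i.1)
          = fun i => W (d j) i := by
  refine ⟨fun s a b i => if h : i = j then s - ∑ i' : {i : Fin N // i ≠ j}, a i' else b ⟨i, h⟩,
    fun W => ?_⟩
  funext i
  by_cases h : i = j
  · subst h
    simp only [dif_pos rfl]
    have h1 : (∑ n, W n i) = ∑ n, W (d n) i := (Equiv.sum_comp d (fun n => W n i)).symm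
    have h2 : (∑ i' : {k : Fin N // k ≠ i}, W (d i'.1) i)
        = ∑ k ∈ Finset.univ.erase i, W (d k) i :=
      (Finset.sum_subtype _ (fun x => by simp) (fun k => W (d k) i)).symm
    rw [h1, h2, ← Finset.add_sum_erase _ _ (Finset.mem_univ i)]
    simp
  · simp [h]
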